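/- Correctness of Δ-compression: if e1, e2 are entries in the final table T_n satisfying α_{e1} ⊆ α_{e2} and c_{e1} ≤ c_{e2} − Δ_{e2} + Δ(n), then α_{e1} is Δ(n)-covered by α_{e2}, i.e., sup(α_{e1}, n) ≤ sup(α_{e2}, n) + Δ(n). -/
import Mathlib


/-- Support of itemset `α` at timestamp `n` in the stream `t`. -/
def sup (t : ℕ → Finset ℕ) (α : Finset ℕ) (i : ℕ) : ℕ :=
  ((Finset.Icc 1 i).filter (fun j => α ⊆ t j)).card

/-- An entry of the table: stored itemset, frequency count and error count. -/
structure Entry where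
  itemset : Finset ℕ
  count : ℕ
  err : ℕ

/-- Correctness of `Δ`-compression: if entries `e₁, e₂` satisfy the accuracy invariant,
`α_{e₁} ⊆ α_{e₂}` and `c_{e₁} ≤ c_{e₂} − Δ_{e₂} + Δ(n)`, then `α_{e₁}` is
`Δ(n)`-covered by `α_{e₂}`. -/
theorem stmt11 (t : ℕ → Finset ℕ) (n Δn : ℕ) (e₁ e₂ : Entry)
    (hacc1 : e₁.count - e₁.err ≤ sup t e₁.itemset n ∧ sup t e₁.itemset n ≤ e₁.count)
    (hacc2 : e₂.count - e₂.err ≤ sup t e₂.itemset n ∧ sup t e₂.itemset n ≤ e₂.count)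
    (hsub : e₁.itemset ⊆ e₂.itemset)
    (hc : e₁.count ≤ e₂.count - e₂.err + Δn) :
    sup t e₁.itemset n ≤ sup t e₂.itemset n + Δn := by
  have := hacc1.2; have := hacc2.1; omega
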